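/- Either b = 0 and a is unitary (a*a = aa* = 1), or the spectrum of a a* in 𝒜 equals {1} ∪ {1 − q^{2k} : k ∈ ℕ}. -/

import Mathlib

open scoped Pointwise


lemma suq2_real_aux (q : ℝ) (hq0 : 0 < q) (hq1 : q < 1) (T : Set ℝ)
    (hcomp : IsCompact T)
    (hsub : T ⊆ Set.Icc 0 1)
    (hfwd : ∀ t ∈ T, t = 1 ∨ ∃ s ∈ T, t = q ^ 2 * s)
    (hbwd : ∀ t ∈ T, q ^ 2 * t ∈ T)
    (hpos : ∃ t ∈ T, 0 < t) :
    T = {0} ∪ {t : ℝ | ∃ k : ℕ, t = q ^ (2 * k)} := by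
  obtain ⟨t0, ht0T, ht0pos⟩ := hpos
  have hne : T.Nonempty := ⟨t0, ht0T⟩
  have hq2lt : q ^ 2 < 1 := by nlinarith
  have hq2pos : 0 < q ^ 2 := by positivity
  have hsupmem : sSup T ∈ T := hcomp.sSup_mem hne
  have hsuppos : 0 < sSup T := lt_of_lt_of_le ht0pos (le_csSup hcomp.bddAbove ht0T)
  have hone : (1 : ℝ) ∈ T := by
    rcases hfwd _ hsupmem with h | ⟨s, hsT, hs⟩
    · rwa [← h]
    · exfalso
      have hsle : s ≤ sSup T := le_csSup hcomp.bddAbove hsT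
      nlinarith
  have hpow : ∀ k : ℕ, q ^ (2 * k) ∈ T := by
    intro k
    induction k with
    | zero => simpa using hone
    | succ n ih =>
        have h := hbwd _ ih
        have heq : q ^ (2 * (n + 1)) = q ^ 2 * q ^ (2 * n) := by ring
        rwa [heq]
  have htend : Filter.Tendsto (fun k : ℕ => q ^ (2 * k)) Filter.atTop (nhds 0) := by
    have h2 : ∀ k, q ^ (2 * k) = (q ^ 2) ^ k := fun k => by rw [pow_mul]
    simpa [h2] using tendsto_pow_atTop_nhds_zero_of_lt_one (le_of_lt hq2pos) hq2lt
  have hzero : (0 : ℝ) ∈ T :=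
    hcomp.isClosed.mem_of_tendsto htend (Filter.Eventually.of_forall hpow)
  ext t
  simp only [Set.mem_union, Set.mem_singleton_iff, Set.mem_setOf_eq]
  constructor
  · intro htT
    by_contra hcon
    push_neg at hcon
    obtain ⟨htne, hknot⟩ := hcon
    have htpos : 0 < t := (hsub htT).1.lt_of_ne (Ne.symm htne)
    have hchain : ∀ n : ℕ, ∃ s ∈ T, t = q ^ (2 * n) * s := by
      intro n
      induction n with
      | zero => exact ⟨t, htT, by simp⟩
      | succ m ih =>
          obtain ⟨s, hsT, hts⟩ := ih
          rcases hfwd s hsT with h1 | ⟨u, huT, hu⟩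
          · exact absurd (by rw [hts, h1, mul_one]) (hknot m)
          · exact ⟨u, huT, by rw [hts, hu]; ring⟩
    have hle : ∀ n : ℕ, t ≤ q ^ (2 * n) := by
      intro n
      obtain ⟨s, hsT, hts⟩ := hchain n
      have hs1 := (hsub hsT).2
      have h0 : 0 < q ^ (2 * n) := by positivity
      nlinarith
    have : t ≤ 0 := ge_of_tendsto htend (Filter.Eventually.of_forall hle)
    linarith
  · rintro (rfl | ⟨k, rfl⟩)
    · exact hzero
    · exact hpow k

/-- In a unital C*-algebra `𝒜` with elements `a, b` satisfying the defining
relations of `SU_q(2)` (for a fixed real `0 < q < 1`), either `b = 0` and `a` is unitary,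
or the spectrum of `a a*` equals `{1} ∪ {1 - q^(2k) : k ∈ ℕ}`. -/
theorem spectrum_aastar_SUq2
    {𝒜 : Type*} [NormedRing 𝒜] [StarRing 𝒜] [CStarRing 𝒜]
    [NormedAlgebra ℂ 𝒜] [CompleteSpace 𝒜] [StarModule ℂ 𝒜]
    (q : ℝ) (hq0 : 0 < q) (hq1 : q < 1) (a b : 𝒜)
    (h1 : b * a = (q : ℂ) • (a * b))
    (h2 : star b * a = (q : ℂ) • (a * star b))
    (h3 : b * star b = star b * b)
    (h4 : star a * a + ((q : ℂ) ^ 2) • (star b * b) = 1)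
    (h5 : a * star a + b * star b = 1) :
    (b = 0 ∧ star a * a = 1 ∧ a * star a = 1) ∨
      spectrum ℂ (a * star a)
        = ({1} : Set ℂ) ∪ {z : ℂ | ∃ k : ℕ, z = 1 - (q : ℂ) ^ (2 * k)} := by
  letI : CStarAlgebra 𝒜 :=
    { ‹NormedRing 𝒜›, ‹StarRing 𝒜›, ‹CStarRing 𝒜›, ‹NormedAlgebra ℂ 𝒜›,
      ‹CompleteSpace 𝒜›, ‹StarModule ℂ 𝒜› with }
  by_cases hb : b = 0
  · left
    subst hb
    simp only [star_zero, mul_zero, zero_mul, smul_zero, add_zero] at h4 h5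
    exact ⟨rfl, h4, h5⟩
  right
  set X : 𝒜 := star b * b with hXdef
  have hXsa : IsSelfAdjoint X := IsSelfAdjoint.star_mul_self b
  have hAA : a * star a = 1 - X := by
    rw [eq_sub_iff_add_eq, ← h3]
    exact h5
  have hsA : star a * a = 1 - ((q : ℂ) ^ 2) • X := by
    rw [eq_sub_iff_add_eq]; exact h4
  -- spectrum of a * star a
  have hspecAA : spectrum ℂ (a * star a) = (fun w : ℂ => 1 - w) '' spectrum ℂ X := by
    rw [hAA]
    have h := spectrum.singleton_sub_eq X (1 : ℂ)
    rw [map_one] at h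
    rw [← h, Set.singleton_sub]
  have hq2ne : ((q : ℂ) ^ 2) ≠ 0 := pow_ne_zero 2 (by exact_mod_cast hq0.ne')
  have hsmul : spectrum ℂ (((q : ℂ) ^ 2) • X) = ((q : ℂ) ^ 2) • spectrum ℂ X := by
    have h := spectrum.unit_smul_eq_smul X (Units.mk0 ((q : ℂ) ^ 2) hq2ne)
    simpa [Units.smul_def] using h
  have hspecSA : spectrum ℂ (star a * a)
      = (fun w : ℂ => 1 - ((q : ℂ) ^ 2) * w) '' spectrum ℂ X := by
    rw [hsA]
    have h := spectrum.singleton_sub_eq (((q : ℂ) ^ 2) • X) (1 : ℂ)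
    rw [map_one] at h
    rw [← h, Set.singleton_sub, hsmul]
    ext z
    constructor
    · rintro ⟨w, hw, rfl⟩
      obtain ⟨u, hu, rfl⟩ := hw
      exact ⟨u, hu, by simp [smul_eq_mul]⟩
    · rintro ⟨u, hu, rfl⟩
      exact ⟨((q : ℂ) ^ 2) • u, Set.smul_mem_smul_set hu, by simp [smul_eq_mul]⟩
  -- the real spectrum set
  have hreal : ∀ z ∈ spectrum ℂ X, z = (z.re : ℂ) := fun z hz => hXsa.mem_spectrum_eq_re hz
  set T : Set ℝ := {t : ℝ | (t : ℂ) ∈ spectrum ℂ X} with hTdef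
  have hXnn : ∀ t ∈ T, (0 : ℝ) ≤ t := by
    intro t ht
    have h' : t ∈ spectrum ℝ X := (spectrum.algebraMap_mem_iff (R := ℝ) (A := 𝒜) ℂ).mp (by simpa using (show ((t : ℂ)) ∈ spectrum ℂ X from ht))
    rw [hXdef] at h'
    exact spectrum_star_mul_self_nonneg t h'
  have hAAnn : ∀ t : ℝ, ((t : ℂ) ∈ spectrum ℂ (a * star a)) → 0 ≤ t := by
    intro t ht
    have h' : t ∈ spectrum ℝ (a * star a) :=
      (spectrum.algebraMap_mem_iff (R := ℝ) (A := 𝒜) ℂ).mp (by simpa using ht)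
    have h'' : t ∈ spectrum ℝ (star (star a) * star a) := by rwa [star_star]
    exact spectrum_star_mul_self_nonneg t h''
  have hTle1 : ∀ t ∈ T, t ≤ 1 := by
    intro t ht
    have hmem : ((1 - t : ℝ) : ℂ) ∈ spectrum ℂ (a * star a) := by
      rw [hspecAA]
      exact ⟨(t : ℂ), ht, by push_cast; ring⟩
    linarith [hAAnn _ hmem]
  have hsub : T ⊆ Set.Icc 0 1 := fun t ht => ⟨hXnn t ht, hTle1 t ht⟩
  have hswap := spectrum.nonzero_mul_comm (𝕜 := ℂ) a (star a)
  have hbwd : ∀ t ∈ T, q ^ 2 * t ∈ T := by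
    intro t ht
    have ht0 := hXnn t ht
    have ht1 := hTle1 t ht
    have hmem : ((1 - q ^ 2 * t : ℝ) : ℂ) ∈ spectrum ℂ (star a * a) := by
      rw [hspecSA]
      exact ⟨(t : ℂ), ht, by push_cast; ring⟩
    have hne : ((1 - q ^ 2 * t : ℝ) : ℂ) ≠ 0 := by
      have hlt : (0 : ℝ) < 1 - q ^ 2 * t := by nlinarith
      exact_mod_cast hlt.ne'
    have hmem2 : ((1 - q ^ 2 * t : ℝ) : ℂ) ∈ spectrum ℂ (a * star a) := by
      have h' : ((1 - q ^ 2 * t : ℝ) : ℂ) ∈ spectrum ℂ (star a * a) \ {0} := ⟨hmem, hne⟩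
      rw [← hswap] at h'
      exact h'.1
    rw [hspecAA] at hmem2
    obtain ⟨w, hw, heq⟩ := hmem2
    have hwq : w = ((q ^ 2 * t : ℝ) : ℂ) := by
      push_cast at heq ⊢
      linear_combination -heq
    show ((q ^ 2 * t : ℝ) : ℂ) ∈ spectrum ℂ X
    rw [← hwq]
    exact hw
  have hfwd : ∀ t ∈ T, t = 1 ∨ ∃ s ∈ T, t = q ^ 2 * s := by
    intro t ht
    by_cases ht1 : t = 1
    · exact Or.inl ht1
    right
    have hmem : ((1 - t : ℝ) : ℂ) ∈ spectrum ℂ (a * star a) := by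
      rw [hspecAA]
      exact ⟨(t : ℂ), ht, by push_cast; ring⟩
    have hne : ((1 - t : ℝ) : ℂ) ≠ 0 := by
      have h0 : (1 - t : ℝ) ≠ 0 := sub_ne_zero.mpr (Ne.symm ht1)
      exact_mod_cast h0
    have hmem2 : ((1 - t : ℝ) : ℂ) ∈ spectrum ℂ (star a * a) := by
      have h' : ((1 - t : ℝ) : ℂ) ∈ spectrum ℂ (a * star a) \ {0} := ⟨hmem, hne⟩
      rw [hswap] at h'
      exact h'.1
    rw [hspecSA] at hmem2
    obtain ⟨w, hw, heq⟩ := hmem2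
    have hwre := hXsa.mem_spectrum_eq_re hw
    refine ⟨w.re, ?_, ?_⟩
    · show ((w.re : ℝ) : ℂ) ∈ spectrum ℂ X
      rw [← hwre]; exact hw
    · have hcast : (t : ℂ) = (q : ℂ) ^ 2 * w := by
        push_cast at heq
        linear_combination heq
      rw [hwre] at hcast
      exact_mod_cast hcast
  have hTcomp : IsCompact T := by
    have himg : T = Complex.re '' spectrum ℂ X := by
      ext t
      constructor
      · intro ht
        exact ⟨(t : ℂ), ht, by simp⟩
      · rintro ⟨z, hz, rfl⟩
        have hzre := hXsa.mem_spectrum_eq_re hz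
        show ((z.re : ℝ) : ℂ) ∈ spectrum ℂ X
        rw [← hzre]; exact hz
    rw [himg]
    exact (spectrum.isCompact X).image Complex.continuous_re
  have hXne : X ≠ 0 := by
    intro h
    apply hb
    have hnorm : ‖b‖ * ‖b‖ = 0 := by
      rw [← CStarRing.norm_star_mul_self, ← hXdef, h, norm_zero]
    exact norm_eq_zero.mp (mul_self_eq_zero.mp hnorm)
  have hpos : ∃ t ∈ T, 0 < t := by
    by_contra hcon
    push_neg at hcon
    have hsub0 : spectrum ℂ X ⊆ {0} := by
      intro z hz
      have hzre := hXsa.mem_spectrum_eq_re hz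
      have hmemT : z.re ∈ T := by
        show ((z.re : ℝ) : ℂ) ∈ spectrum ℂ X
        rw [← hzre]; exact hz
      have hle := hcon _ hmemT
      have hge := hXnn _ hmemT
      have h0 : z.re = 0 := le_antisymm hle hge
      have : z = 0 := by rw [hzre, h0]; simp
      simp [this]
    have hrad : spectralRadius ℂ X = 0 := by
      apply le_antisymm _ (zero_le (a := spectralRadius ℂ X))
      unfold spectralRadius
      exact iSup₂_le fun k hk => by
        have : k = 0 := hsub0 hk
        simp [this]
    have hnn := hXsa.spectralRadius_eq_nnnorm
    rw [hrad] at hnn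
    exact hXne (nnnorm_eq_zero.mp (ENNReal.coe_eq_zero.mp hnn.symm))
  have hTeq := suq2_real_aux q hq0 hq1 T hTcomp hsub hfwd hbwd hpos
  have h0T : (0 : ℝ) ∈ T := by rw [hTeq]; exact Or.inl rfl
  have hkT : ∀ k : ℕ, q ^ (2 * k) ∈ T := fun k => by rw [hTeq]; exact Or.inr ⟨k, rfl⟩
  rw [hspecAA]
  ext z
  simp only [Set.mem_union, Set.mem_singleton_iff, Set.mem_setOf_eq, Set.mem_image]
  constructor
  · rintro ⟨w, hw, rfl⟩
    have hwre := hXsa.mem_spectrum_eq_re hw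
    have hmemT : w.re ∈ T := by
      show ((w.re : ℝ) : ℂ) ∈ spectrum ℂ X
      rw [← hwre]; exact hw
    rw [hTeq] at hmemT
    simp only [Set.mem_union, Set.mem_singleton_iff, Set.mem_setOf_eq] at hmemT
    rcases hmemT with h0 | ⟨k, hk⟩
    · left
      rw [hwre, h0]
      simp
    · right
      exact ⟨k, by rw [hwre, hk]; push_cast; ring⟩
  · rintro (rfl | ⟨k, rfl⟩)
    · exact ⟨0, by simpa using (show (((0 : ℝ)) : ℂ) ∈ spectrum ℂ X from h0T), by simp⟩
    · refine ⟨((q ^ (2 * k) : ℝ) : ℂ), hkT k, ?_⟩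
      push_cast
      ring
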